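/- Let Λ(t,x) = ⟨tx⟩^{-1} log(1 + |x|^{-1}) for t ≥ 1, x > 0. Then t^{1/2} ‖Λ(t,·)‖_{L²(0,∞)} ≤ C log⟨t⟩ for all t ≥ 1, i.e. t^{1/2}(∫₀^∞ ⟨tx⟩^{-2} log²(1+1/x) dx)^{1/2} ≤ C log⟨t⟩. -/

import Mathlib

open MeasureTheory Real Set

/-- The Japanese bracket `⟨y⟩ = (1 + y²)^{1/2}`. -/
noncomputable def jap (y : ℝ) : ℝ := Real.sqrt (1 + y ^ 2)


noncomputable def phi (u : ℝ) : ℝ := u ^ (-(1:ℝ)/2) * (1 + u ^ 2)⁻¹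

lemma phi_contOn {s : Set ℝ} (hs : s ⊆ Ioi 0) : ContinuousOn phi s := by
  intro u hu
  have hu0 : u ≠ 0 := ne_of_gt (hs hu)
  apply ContinuousAt.continuousWithinAt
  exact (Real.continuousAt_rpow_const u _ (Or.inl hu0)).mul
    (((continuous_const.add (continuous_pow 2)).continuousAt).inv₀ (by show (1:ℝ) + u ^ 2 ≠ 0; positivity))

lemma phi_nonneg {u : ℝ} (hu : 0 ≤ u) : 0 ≤ phi u :=
  mul_nonneg (Real.rpow_nonneg hu _) (by positivity)

lemma phi_int_Ioc : IntegrableOn phi (Ioc (0:ℝ) 1) := by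
  have hmaj : IntegrableOn (fun u : ℝ => u ^ (-(1:ℝ)/2)) (Ioc (0:ℝ) 1) := by
    have : IntervalIntegrable (fun u : ℝ => u ^ (-(1:ℝ)/2)) volume 0 1 :=
      intervalIntegral.intervalIntegrable_rpow' (by norm_num)
    rwa [intervalIntegrable_iff_integrableOn_Ioc_of_le (by norm_num)] at this
  refine hmaj.mono' ((phi_contOn Ioc_subset_Ioi_self).aestronglyMeasurable measurableSet_Ioc) ?_
  filter_upwards [ae_restrict_mem measurableSet_Ioc] with u hu
  rw [Real.norm_eq_abs, abs_of_nonneg (phi_nonneg hu.1.le)]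
  unfold phi
  have h1 : (1 + u^2)⁻¹ ≤ 1 := by
    rw [inv_le_one_iff₀]; right; nlinarith
  nlinarith [Real.rpow_nonneg (le_of_lt hu.1) (-(1:ℝ)/2), h1]

lemma phi_int_Ioi1 : IntegrableOn phi (Ioi (1:ℝ)) := by
  have hmaj : IntegrableOn (fun u : ℝ => u ^ (-(5:ℝ)/2)) (Ioi (1:ℝ)) :=
    integrableOn_Ioi_rpow_of_lt (by norm_num) one_pos
  refine hmaj.mono' ((phi_contOn (Ioi_subset_Ioi one_pos.le)).aestronglyMeasurable measurableSet_Ioi) ?_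
  filter_upwards [ae_restrict_mem measurableSet_Ioi] with u hu
  rw [Real.norm_eq_abs, abs_of_nonneg (phi_nonneg (lt_trans one_pos hu).le)]
  unfold phi
  have hu0 : (0:ℝ) < u := lt_trans one_pos hu
  have h1 : (1 + u^2)⁻¹ ≤ u ^ (-(2:ℝ)) := by
    rw [Real.rpow_neg hu0.le, show ((2:ℝ)) = ((2:ℕ):ℝ) by norm_num, Real.rpow_natCast]
    apply inv_anti₀ (by positivity)
    nlinarith
  calc u ^ (-(1:ℝ)/2) * (1 + u^2)⁻¹ ≤ u ^ (-(1:ℝ)/2) * u ^ (-(2:ℝ)) := by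
        apply mul_le_mul_of_nonneg_left h1 (Real.rpow_nonneg hu0.le _)
    _ = u ^ (-(5:ℝ)/2) := by rw [← Real.rpow_add hu0]; norm_num

lemma phi_int : IntegrableOn phi (Ioi (0:ℝ)) := by
  have : Ioc (0:ℝ) 1 ∪ Ioi 1 = Ioi 0 := Ioc_union_Ioi_eq_Ioi (by norm_num)
  rw [← this]
  exact phi_int_Ioc.union phi_int_Ioi1

lemma phi_integral_le : ∫ u in Ioi (0:ℝ), phi u ≤ 8/3 := by
  have hU : Ioc (0:ℝ) 1 ∪ Ioi 1 = Ioi 0 := Ioc_union_Ioi_eq_Ioi (by norm_num)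
  have hsplit : ∫ u in Ioi (0:ℝ), phi u
      = (∫ u in Ioc (0:ℝ) 1, phi u) + ∫ u in Ioi (1:ℝ), phi u := by
    rw [← hU]
    exact setIntegral_union (Ioc_disjoint_Ioi le_rfl) measurableSet_Ioi phi_int_Ioc phi_int_Ioi1
  have h1 : ∫ u in Ioc (0:ℝ) 1, phi u ≤ 2 := by
    have hmaj : IntegrableOn (fun u : ℝ => u ^ (-(1:ℝ)/2)) (Ioc (0:ℝ) 1) := by
      have : IntervalIntegrable (fun u : ℝ => u ^ (-(1:ℝ)/2)) volume 0 1 :=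
        intervalIntegral.intervalIntegrable_rpow' (by norm_num)
      rwa [intervalIntegrable_iff_integrableOn_Ioc_of_le (by norm_num)] at this
    have hval : ∫ u in Ioc (0:ℝ) 1, u ^ (-(1:ℝ)/2) = 2 := by
      rw [← intervalIntegral.integral_of_le (by norm_num : (0:ℝ) ≤ 1)]
      rw [integral_rpow (Or.inl (by norm_num))]
      norm_num
    calc ∫ u in Ioc (0:ℝ) 1, phi u ≤ ∫ u in Ioc (0:ℝ) 1, u ^ (-(1:ℝ)/2) := by
          apply setIntegral_mono_on phi_int_Ioc hmaj measurableSet_Ioc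
          intro u hu
          unfold phi
          have h1 : (1 + u^2)⁻¹ ≤ 1 := by
            rw [inv_le_one_iff₀]; right; nlinarith
          nlinarith [Real.rpow_nonneg (le_of_lt hu.1) (-(1:ℝ)/2), h1]
      _ = 2 := hval
  have h2 : ∫ u in Ioi (1:ℝ), phi u ≤ 2/3 := by
    have hmaj : IntegrableOn (fun u : ℝ => u ^ (-(5:ℝ)/2)) (Ioi (1:ℝ)) :=
      integrableOn_Ioi_rpow_of_lt (by norm_num) one_pos
    have hval : ∫ u in Ioi (1:ℝ), u ^ (-(5:ℝ)/2) = 2/3 := by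
      rw [integral_Ioi_rpow_of_lt (by norm_num) one_pos]
      norm_num
    calc ∫ u in Ioi (1:ℝ), phi u ≤ ∫ u in Ioi (1:ℝ), u ^ (-(5:ℝ)/2) := by
          apply setIntegral_mono_on phi_int_Ioi1 hmaj measurableSet_Ioi
          intro u hu
          unfold phi
          have hu0 : (0:ℝ) < u := lt_trans one_pos hu
          have h1 : (1 + u^2)⁻¹ ≤ u ^ (-(2:ℝ)) := by
            rw [Real.rpow_neg hu0.le, show ((2:ℝ)) = ((2:ℕ):ℝ) by norm_num, Real.rpow_natCast]
            apply inv_anti₀ (by positivity)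
            nlinarith
          calc u ^ (-(1:ℝ)/2) * (1 + u^2)⁻¹ ≤ u ^ (-(1:ℝ)/2) * u ^ (-(2:ℝ)) :=
                mul_le_mul_of_nonneg_left h1 (Real.rpow_nonneg hu0.le _)
            _ = u ^ (-(5:ℝ)/2) := by rw [← Real.rpow_add hu0]; norm_num
      _ = 2/3 := hval
  linarith


lemma jap_rpow_neg_two (y : ℝ) : (jap y) ^ (-(2:ℝ)) = (1 + y ^ 2)⁻¹ := by
  unfold jap
  have h : (0:ℝ) ≤ 1 + y ^ 2 := by positivity
  rw [Real.rpow_neg (Real.sqrt_nonneg _), show ((2:ℝ)) = ((2:ℕ):ℝ) by norm_num,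
    Real.rpow_natCast, Real.sq_sqrt h]

lemma log1p_le {y : ℝ} (hy : 0 ≤ y) : Real.log (1 + y) ≤ y := by
  have := Real.log_le_sub_one_of_pos (show (0:ℝ) < 1 + y by linarith)
  linarith

lemma log1p_le_4rpow {y : ℝ} (hy : 0 ≤ y) : Real.log (1 + y) ≤ 4 * y ^ ((1:ℝ)/4) := by
  set s := y ^ ((1:ℝ)/4) with hs
  have hs0 : 0 ≤ s := Real.rpow_nonneg hy _
  have hs4 : s ^ (4:ℕ) = y := by
    rw [hs, ← Real.rpow_natCast (y ^ ((1:ℝ)/4)) 4, ← Real.rpow_mul hy]; norm_num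
  have h1 : (1:ℝ) + y ≤ (1 + s) ^ (4:ℕ) := by nlinarith [pow_nonneg hs0 2, pow_nonneg hs0 3]
  calc Real.log (1 + y) ≤ Real.log ((1 + s) ^ (4:ℕ)) :=
        Real.log_le_log (by linarith) h1
    _ = 4 * Real.log (1 + s) := by rw [Real.log_pow]; norm_num
    _ ≤ 4 * s := by have := log1p_le hs0; linarith

lemma log_split {t x : ℝ} (ht : 1 ≤ t) (hx : 0 < x) :
    Real.log (1 + 1/x) ≤ Real.log (1 + t) + Real.log (1 + 1/(t*x)) := by
  have htx : 0 < t * x := by positivity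
  have hle : 1 + 1/x ≤ (1 + t) * (1 + 1/(t*x)) := by
    have h1 : 1/(t*x) > 0 := by positivity
    have h2 : (1 + t) * (1 + 1/(t*x)) = 1 + t + 1/(t*x) + 1/x := by
      field_simp; ring
    linarith
  calc Real.log (1 + 1/x) ≤ Real.log ((1 + t) * (1 + 1/(t*x))) :=
        Real.log_le_log (by positivity) hle
    _ = Real.log (1 + t) + Real.log (1 + 1/(t*x)) :=
        Real.log_mul (by positivity) (by positivity)

lemma pointwise_bound {t x : ℝ} (ht : 1 ≤ t) (hx : 0 < x) :
    (1 + (t*x) ^ 2)⁻¹ * (Real.log (1 + 1/x)) ^ 2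
      ≤ 2 * (Real.log (1 + t)) ^ 2 * (1 + (t*x) ^ 2)⁻¹ + 32 * phi (t*x) := by
  have htx : 0 < t * x := by positivity
  set a := Real.log (1 + t) with ha
  set b := Real.log (1 + 1/(t*x)) with hb
  have ha0 : 0 ≤ a := Real.log_nonneg (by linarith)
  have hb0 : 0 ≤ b := Real.log_nonneg (by nlinarith [one_div_pos.mpr htx])
  have hL0 : 0 ≤ Real.log (1 + 1/x) := Real.log_nonneg (by nlinarith [one_div_pos.mpr hx])
  have hLab : Real.log (1 + 1/x) ≤ a + b := log_split ht hx
  have hsq : (Real.log (1 + 1/x)) ^ 2 ≤ 2 * a ^ 2 + 2 * b ^ 2 := by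
    nlinarith [sq_nonneg (a - b), mul_le_mul hLab hLab hL0 (by linarith : (0:ℝ) ≤ a + b)]
  -- b^2 ≤ 16 * (t*x)^(-(1/2))
  have hy : (0:ℝ) < 1/(t*x) := by positivity
  have hb4 : b ≤ 4 * (1/(t*x)) ^ ((1:ℝ)/4) := log1p_le_4rpow hy.le
  have hq : ((1/(t*x)) ^ ((1:ℝ)/4)) ^ (2:ℕ) = (t*x) ^ (-(1:ℝ)/2) := by
    rw [← Real.rpow_natCast ((1/(t*x)) ^ ((1:ℝ)/4)) 2, ← Real.rpow_mul hy.le]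
    rw [one_div, ← Real.rpow_neg_one (t*x), ← Real.rpow_mul htx.le]
    norm_num
  have hb2 : b ^ 2 ≤ 16 * (t*x) ^ (-(1:ℝ)/2) := by
    have := pow_le_pow_left₀ hb0 hb4 2
    rw [mul_pow] at this
    rw [hq] at this
    linarith
  have hw : 0 ≤ (1 + (t*x) ^ 2)⁻¹ := by positivity
  have : (Real.log (1 + 1/x)) ^ 2 * (1 + (t*x) ^ 2)⁻¹
      ≤ (2 * a ^ 2 + 2 * (16 * (t*x) ^ (-(1:ℝ)/2))) * (1 + (t*x) ^ 2)⁻¹ := by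
    apply mul_le_mul_of_nonneg_right _ hw
    nlinarith
  unfold phi
  nlinarith [this]

/-- for `Λ(t,x) = ⟨tx⟩⁻¹ log(1 + |x|⁻¹)`, one has
`t^{1/2} ‖Λ(t,·)‖_{L²(0,∞)} ≤ C log⟨t⟩` for all `t ≥ 1`. -/
theorem log_weight_L2_bound :
    ∃ C > 0, ∀ t : ℝ, 1 ≤ t →
      t ^ ((1 : ℝ) / 2) *
          Real.sqrt (∫ x in Set.Ioi (0 : ℝ), (jap (t * x)) ^ (-(2 : ℝ)) * (Real.log (1 + 1 / x)) ^ 2)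
        ≤ C * Real.log (jap t) := by
  refine ⟨30, by norm_num, fun t ht => ?_⟩
  have ht0 : (0:ℝ) < t := lt_of_lt_of_le one_pos ht
  set L := Real.log (jap t) with hLdef
  have hL : L = Real.log (1 + t ^ 2) / 2 := by
    rw [hLdef, jap, Real.log_sqrt (by positivity)]
  have hL0 : 0 ≤ L := by
    rw [hL]
    have : (0:ℝ) ≤ Real.log (1 + t ^ 2) := Real.log_nonneg (by nlinarith)
    linarith
  have hLlb : Real.log 2 / 2 ≤ L := by
    rw [hL]
    have : Real.log 2 ≤ Real.log (1 + t ^ 2) := Real.log_le_log (by norm_num) (by nlinarith)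
    linarith
  have halog : Real.log (1 + t) ≤ 2 * L := by
    rw [hL]
    have : Real.log (1 + t) ≤ Real.log (1 + t ^ 2) := Real.log_le_log (by linarith) (by nlinarith)
    linarith
  set a := Real.log (1 + t) with hadef
  have ha0 : 0 ≤ a := Real.log_nonneg (by linarith)
  -- rewrite integrand
  have hcongr : ∀ x : ℝ, (jap (t * x)) ^ (-(2 : ℝ)) * (Real.log (1 + 1 / x)) ^ 2
      = (1 + (t * x) ^ 2)⁻¹ * (Real.log (1 + 1 / x)) ^ 2 := fun x => by
    rw [jap_rpow_neg_two]
  rw [show (∫ x in Set.Ioi (0 : ℝ), (jap (t * x)) ^ (-(2 : ℝ)) * (Real.log (1 + 1 / x)) ^ 2)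
      = ∫ x in Set.Ioi (0 : ℝ), (1 + (t * x) ^ 2)⁻¹ * (Real.log (1 + 1 / x)) ^ 2 from
    integral_congr_ae (Filter.Eventually.of_forall fun x => hcongr x)]
  set I := ∫ x in Set.Ioi (0 : ℝ), (1 + (t * x) ^ 2)⁻¹ * (Real.log (1 + 1 / x)) ^ 2 with hIdef
  -- integrability of majorant pieces
  have hA : IntegrableOn (fun x : ℝ => (1 + (t * x) ^ 2)⁻¹) (Ioi (0:ℝ)) := by
    have := (integrableOn_Ioi_comp_mul_left_iff (fun u : ℝ => (1 + u ^ 2)⁻¹) 0 ht0).mpr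
      (by simpa using integrable_inv_one_add_sq.integrableOn)
    simpa using this
  have hB : IntegrableOn (fun x : ℝ => phi (t * x)) (Ioi (0:ℝ)) := by
    have := (integrableOn_Ioi_comp_mul_left_iff phi 0 ht0).mpr (by simpa using phi_int)
    simpa using this
  have hmaj : IntegrableOn
      (fun x : ℝ => 2 * a ^ 2 * (1 + (t * x) ^ 2)⁻¹ + 32 * phi (t * x)) (Ioi (0:ℝ)) :=
    (hA.const_mul _).add (hB.const_mul _)
  -- integrability of integrand
  have hg_cont : ContinuousOn (fun x : ℝ => (1 + (t * x) ^ 2)⁻¹ * (Real.log (1 + 1 / x)) ^ 2)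
      (Ioi (0:ℝ)) := by
    intro x hx
    have hx0 : (0:ℝ) < x := hx
    apply ContinuousAt.continuousWithinAt
    have h1 : ContinuousAt (fun x : ℝ => (1 + (t * x) ^ 2)⁻¹) x :=
      (((continuous_const.mul continuous_id).pow 2).continuousAt.const_add 1).inv₀ (by show (1:ℝ) + (t * x) ^ 2 ≠ 0; positivity)
    have h2 : ContinuousAt (fun x : ℝ => Real.log (1 + 1 / x)) x := by
      have : ContinuousAt (fun x : ℝ => 1 + 1 / x) x := by
        simp only [one_div]
        exact (continuousAt_inv₀ hx0.ne').const_add 1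
      exact (Real.continuousAt_log (by positivity)).comp this
    exact h1.mul (h2.pow 2)
  have hg_int : IntegrableOn (fun x : ℝ => (1 + (t * x) ^ 2)⁻¹ * (Real.log (1 + 1 / x)) ^ 2)
      (Ioi (0:ℝ)) := by
    refine hmaj.mono' (hg_cont.aestronglyMeasurable measurableSet_Ioi) ?_
    filter_upwards [ae_restrict_mem measurableSet_Ioi] with x hx
    have hx0 : (0:ℝ) < x := hx
    rw [Real.norm_eq_abs, abs_of_nonneg (by positivity)]
    exact pointwise_bound ht hx0
  -- bound I
  have hIbound : I ≤ t⁻¹ * (π * a ^ 2 + 256/3) := by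
    have hmono : I ≤ ∫ x in Ioi (0:ℝ),
        (2 * a ^ 2 * (1 + (t * x) ^ 2)⁻¹ + 32 * phi (t * x)) := by
      apply setIntegral_mono_on hg_int hmaj measurableSet_Ioi
      intro x hx
      exact pointwise_bound ht hx
    have hAval : ∫ x in Ioi (0:ℝ), (1 + (t * x) ^ 2)⁻¹ = t⁻¹ * (π / 2) := by
      have := integral_comp_mul_left_Ioi (fun u : ℝ => (1 + u ^ 2)⁻¹) 0 ht0
      simp only [mul_zero, smul_eq_mul] at this
      rw [this, integral_Ioi_inv_one_add_sq]
      simp [Real.arctan_zero]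
    have hBval : ∫ x in Ioi (0:ℝ), phi (t * x) ≤ t⁻¹ * (8/3) := by
      have := integral_comp_mul_left_Ioi phi 0 ht0
      simp only [mul_zero, smul_eq_mul] at this
      rw [this]
      exact mul_le_mul_of_nonneg_left phi_integral_le (by positivity)
    have hsum : ∫ x in Ioi (0:ℝ), (2 * a ^ 2 * (1 + (t * x) ^ 2)⁻¹ + 32 * phi (t * x))
        = 2 * a ^ 2 * (∫ x in Ioi (0:ℝ), (1 + (t * x) ^ 2)⁻¹)
          + 32 * ∫ x in Ioi (0:ℝ), phi (t * x) := by
      rw [integral_add (hA.const_mul _) (hB.const_mul _), integral_const_mul, integral_const_mul]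
    rw [hsum, hAval] at hmono
    calc I ≤ 2 * a ^ 2 * (t⁻¹ * (π / 2)) + 32 * ∫ x in Ioi (0:ℝ), phi (t * x) := hmono
      _ ≤ 2 * a ^ 2 * (t⁻¹ * (π / 2)) + 32 * (t⁻¹ * (8/3)) := by nlinarith [hBval]
      _ = t⁻¹ * (π * a ^ 2 + 256/3) := by ring
  -- finish
  have hItI : t * I ≤ π * a ^ 2 + 256/3 := by
    have := mul_le_mul_of_nonneg_left hIbound ht0.le
    rwa [← mul_assoc, mul_inv_cancel₀ ht0.ne', one_mul] at this
  have hkey : t * I ≤ 900 * L ^ 2 := by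
    have hpi : π ≤ 4 := Real.pi_le_four
    have hlog2 : (0.6931471803:ℝ) < Real.log 2 := Real.log_two_gt_d9
    nlinarith [sq_nonneg a, sq_nonneg L, sq_nonneg (a - 2*L), hLlb]
  calc t ^ ((1:ℝ)/2) * Real.sqrt I = Real.sqrt t * Real.sqrt I := by
        rw [← Real.sqrt_eq_rpow]
    _ = Real.sqrt (t * I) := (Real.sqrt_mul ht0.le I).symm
    _ ≤ Real.sqrt (900 * L ^ 2) := Real.sqrt_le_sqrt hkey
    _ = 30 * L := by
        rw [show (900:ℝ) * L ^ 2 = (30 * L) ^ 2 by ring, Real.sqrt_sq (by linarith)]
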